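/- Euler's sum formula for double zeta values: for any integer l ≥ 3, Σ_{l1≥2, l2≥1, l1+l2=l} ζ(l1,l2) = ζ(l), where ζ(l1,l2) = Σ_{m1>m2>0} 1/(m1^{l1} m2^{l2}). -/

import Mathlib

/-- Riemann zeta value -/
noncomputable def rz (l : ℕ) : ℝ :=
  ∑' m : ℕ, if 0 < m then 1 / (m : ℝ) ^ l else 0

/-- double zeta value -/
noncomputable def dz (a b : ℕ) : ℝ :=
  ∑' p : ℕ × ℕ, if p.2 < p.1 ∧ 0 < p.2 then
    1 / ((p.1 : ℝ) ^ a * (p.2 : ℝ) ^ b) else 0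

/-- triple zeta value -/
noncomputable def tz (a b c : ℕ) : ℝ :=
  ∑' t : ℕ × ℕ × ℕ, if t.2.1 < t.1 ∧ t.2.2 < t.2.1 ∧ 0 < t.2.2 then
    1 / ((t.1 : ℝ) ^ a * (t.2.1 : ℝ) ^ b * (t.2.2 : ℝ) ^ c) else 0

/-- admissible triple indices of weight l -/
def TIdx (l : ℕ) : Finset (ℕ × ℕ × ℕ) :=
  (Finset.range (l + 1) ×ˢ Finset.range (l + 1) ×ˢ Finset.range (l + 1)).filter
    (fun t => 2 ≤ t.1 ∧ 1 ≤ t.2.1 ∧ 1 ≤ t.2.2 ∧ t.1 + t.2.1 + t.2.2 = l)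

namespace EulerSumAux

open Finset Filter

noncomputable def hsum (n : ℕ) : ℝ := ∑ j ∈ Finset.range n, 1 / ((j : ℝ) + 1)

lemma hsum_nonneg (n : ℕ) : 0 ≤ hsum n :=
  Finset.sum_nonneg fun j _ => by positivity

lemma hsum_succ (n : ℕ) : hsum (n + 1) = hsum n + 1 / ((n : ℝ) + 1) := by
  simp [hsum, Finset.sum_range_succ]

lemma hsum_le (n : ℕ) : hsum n ≤ 2 * Real.sqrt n := by
  induction n with
  | zero => simp [hsum]
  | succ k ih =>
      rw [hsum_succ]
      set a := Real.sqrt k with hadef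
      set b := Real.sqrt (k + 1 : ℕ) with hbdef
      have ha0 : 0 ≤ a := Real.sqrt_nonneg _
      have hb0 : 0 ≤ b := Real.sqrt_nonneg _
      have ha2 : a ^ 2 = (k : ℝ) := Real.sq_sqrt (by positivity)
      have hb2 : b ^ 2 = ((k : ℝ) + 1) := by
        rw [hbdef]; push_cast; exact Real.sq_sqrt (by positivity)
      have key : 1 / ((k : ℝ) + 1) ≤ 2 * b - 2 * a := by
        rw [div_le_iff₀ (by positivity)]
        nlinarith [sq_nonneg (a - 1), sq_nonneg (b - 1), sq_nonneg (a - b), sq_nonneg (a + b)]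
      linarith

lemma hsum_le' (n : ℕ) : hsum (n - 1) ≤ 2 * Real.sqrt n := by
  refine (hsum_le _).trans ?_
  have : ((n - 1 : ℕ) : ℝ) ≤ (n : ℝ) := by
    exact_mod_cast Nat.sub_le n 1
  nlinarith [Real.sqrt_le_sqrt this, Real.sqrt_nonneg (n:ℝ)]

lemma summable_sqrt_div : Summable (fun m : ℕ => 2 * (Real.sqrt m / (m : ℝ) ^ 2)) := by
  apply Summable.mul_left
  have hg : Summable (fun m : ℕ => 1 / (m : ℝ) ^ (3/2 : ℝ)) :=
    (Real.summable_one_div_nat_rpow).mpr (by norm_num)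
  refine Summable.of_nonneg_of_le (fun m => by positivity) (fun m => ?_) hg
  rcases Nat.eq_zero_or_pos m with h | h
  · simp [h, Real.zero_rpow (by norm_num : (3/2 : ℝ) ≠ 0)]
  · have hm : (0 : ℝ) < m := by exact_mod_cast h
    rw [Real.sqrt_eq_rpow, show ((m:ℝ)^2 : ℝ) = (m:ℝ) ^ ((2:ℕ):ℝ) from (Real.rpow_natCast _ 2).symm,
      ← Real.rpow_sub hm, show (1:ℝ)/2 - ((2:ℕ):ℝ) = -(3/2) by norm_num,
      Real.rpow_neg hm.le, one_div]

lemma key_id (L : ℕ) (m n : ℝ) (hn : 0 < n) (hmn : n < m) :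
    (∑ a ∈ Icc 2 (L + 2), 1 / (m ^ a * n ^ (L + 3 - a))) + 1 / (m ^ (L + 2) * (m - n))
      = 1 / (m * (m - n) * n ^ (L + 1)) := by
  have hm : (0:ℝ) < m := hn.trans hmn
  have hm0 : m ≠ 0 := hm.ne'
  have hn0 : n ≠ 0 := hn.ne'
  have hd : m - n ≠ 0 := sub_ne_zero.mpr hmn.ne'
  induction L with
  | zero =>
      simp only [Finset.Icc_self, Finset.sum_singleton]
      norm_num
      field_simp
      ring
  | succ L ih =>
      have hsplit : Icc 2 (L + 1 + 2) = insert (L + 3) (Icc 2 (L + 2)) := by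
        rw [show L+1+2 = (L+3) by omega, ← Finset.Ico_insert_right (by omega), show L + 3 = L + 2 + 1 from rfl,
          Finset.Ico_add_one_right_eq_Icc]
      rw [hsplit, Finset.sum_insert (by simp)]
      have hre : ∀ a ∈ Icc 2 (L + 2), 1 / (m ^ a * n ^ (L + 1 + 3 - a))
          = (1/n) * (1 / (m ^ a * n ^ (L + 3 - a))) := by
        intro a ha
        simp only [Finset.mem_Icc] at ha
        have : L + 1 + 3 - a = (L + 3 - a) + 1 := by omega
        rw [this, pow_succ]
        field_simp
      rw [Finset.sum_congr rfl hre, ← Finset.mul_sum]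
      have hS : (∑ a ∈ Icc 2 (L + 2), 1 / (m ^ a * n ^ (L + 3 - a)))
          = 1 / (m * (m - n) * n ^ (L + 1)) - 1 / (m ^ (L + 2) * (m - n)) := by
        linarith [ih]
      rw [hS]
      have e1 : L + 1 + 3 - (L + 3) = 1 := by omega
      rw [e1]
      have hP : m ^ (L + 3) = m ^ (L + 2) * m := by ring
      have hQ : n ^ (L + 2) = n ^ (L + 1) * n := by ring
      rw [hP, hQ]
      have hPne : m ^ (L + 2) ≠ 0 := pow_ne_zero _ hm0
      have hQne : n ^ (L + 1) ≠ 0 := pow_ne_zero _ hn0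
      field_simp
      ring

lemma summable_sq_shift : Summable (fun k : ℕ => 1 / ((k : ℝ) + 1) ^ 2) := by
  have h := (Real.summable_one_div_nat_pow (p := 2)).mpr (by norm_num)
  have := (summable_nat_add_iff (f := fun n : ℕ => 1 / (n : ℝ) ^ 2) 1).mpr h
  simpa [Nat.cast_add] using this

lemma telescope (n : ℕ) (hn : 0 < n) :
    HasSum (fun k : ℕ => 1 / (((k : ℝ) + 1 + n) * ((k : ℝ) + 1))) (hsum n / n) := by
  have hnR : (0:ℝ) < n := by exact_mod_cast hn
  have hsumm : Summable (fun k : ℕ => 1 / (((k : ℝ) + 1 + n) * ((k : ℝ) + 1))) := by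
    apply Summable.of_nonneg_of_le _ _ summable_sq_shift
    · intro k; positivity
    · intro k
      have h1 : (0:ℝ) < (k:ℝ) + 1 := by positivity
      apply one_div_le_one_div_of_le (by positivity)
      nlinarith [sq_nonneg ((k:ℝ)+1)]
  refine (hsumm.hasSum_iff_tendsto_nat).mpr ?_
  have hps : ∀ N : ℕ, n ≤ N → (∑ k ∈ range N, 1 / (((k : ℝ) + 1 + n) * ((k : ℝ) + 1)))
      = (hsum n - ∑ k ∈ Ico N (N + n), 1 / ((k : ℝ) + 1)) / n := by
    intro N hN
    have hpt : ∀ k : ℕ, 1 / (((k : ℝ) + 1 + n) * ((k : ℝ) + 1))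
        = (1 / ((k:ℝ)+1) - 1 / ((k:ℝ)+1+n)) / n := by
      intro k
      have h1 : ((k:ℝ)+1) ≠ 0 := by positivity
      have h2 : ((k:ℝ)+1+n) ≠ 0 := by positivity
      field_simp
      ring
    simp_rw [hpt]
    rw [← Finset.sum_div]
    congr 1
    rw [Finset.sum_sub_distrib]
    have e2 : (∑ k ∈ range N, 1 / ((k:ℝ)+1+n)) = ∑ k ∈ Ico n (N + n), 1 / ((k:ℝ)+1) := by
      rw [Finset.sum_Ico_eq_sum_range]
      simp only [show N + n - n = N from by omega]
      apply Finset.sum_congr rfl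
      intro k _
      push_cast
      ring_nf
    rw [e2]
    have e3 : (∑ k ∈ range N, 1 / ((k:ℝ)+1))
        = hsum n + ∑ k ∈ Ico n N, 1 / ((k:ℝ)+1) := by
      rw [hsum, Finset.range_eq_Ico, Finset.range_eq_Ico]
      exact (Finset.sum_Ico_consecutive (fun j : ℕ => 1 / ((j:ℝ)+1)) (Nat.zero_le n) hN).symm
    have e4 : (∑ k ∈ Ico n (N+n), 1 / ((k:ℝ)+1))
        = (∑ k ∈ Ico n N, 1 / ((k:ℝ)+1)) + ∑ k ∈ Ico N (N+n), 1 / ((k:ℝ)+1) := by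
      rw [Finset.sum_Ico_consecutive _ hN (by omega)]
    rw [e3, e4]; ring
  have htail : Tendsto (fun N : ℕ => ∑ k ∈ Ico N (N + n), 1 / ((k : ℝ) + 1)) atTop (nhds 0) := by
    apply squeeze_zero (fun N => Finset.sum_nonneg fun k _ => by positivity)
      (g := fun N : ℕ => n * (1 / ((N:ℝ) + 1)))
    · intro N
      calc (∑ k ∈ Ico N (N + n), 1 / ((k : ℝ) + 1))
          ≤ ∑ k ∈ Ico N (N + n), 1 / ((N : ℝ) + 1) := by
            apply Finset.sum_le_sum
            intro k hk
            simp only [Finset.mem_Ico] at hk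
            apply one_div_le_one_div_of_le (by positivity)
            have : (N:ℝ) ≤ k := by exact_mod_cast hk.1
            linarith
        _ = n * (1 / ((N:ℝ) + 1)) := by
            rw [Finset.sum_const, Nat.card_Ico, show N + n - N = n from by omega,
              nsmul_eq_mul]
    · simpa using tendsto_one_div_add_atTop_nhds_zero_nat.const_mul (n:ℝ)
  have hfin : Tendsto (fun N : ℕ => (hsum n - ∑ k ∈ Ico N (N + n), 1 / ((k : ℝ) + 1)) / n)
      atTop (nhds (hsum n / n)) := by
    have := ((tendsto_const_nhds (x := hsum n)).sub htail).div_const (n:ℝ)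
    simpa using this
  apply hfin.congr'
  filter_upwards [eventually_ge_atTop n] with N hN
  exact (hps N hN).symm

/-! ### master functions -/

noncomputable def fD (l a : ℕ) (p : ℕ × ℕ) : ℝ :=
  if p.2 < p.1 ∧ 0 < p.2 then 1 / ((p.1 : ℝ) ^ a * (p.2 : ℝ) ^ (l - a)) else 0

noncomputable def fH (l : ℕ) (p : ℕ × ℕ) : ℝ :=
  if p.2 < p.1 ∧ 0 < p.2 then 1 / ((p.1 : ℝ) ^ (l-1) * ((p.1:ℝ) - (p.2:ℝ))) else 0

noncomputable def fG (l : ℕ) (p : ℕ × ℕ) : ℝ :=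
  if p.2 < p.1 ∧ 0 < p.2 then
    1 / ((p.1:ℝ) * ((p.1:ℝ) - (p.2:ℝ)) * (p.2:ℝ) ^ (l-2)) else 0

noncomputable def hR (l : ℕ) (m : ℕ) : ℝ := hsum (m-1) / (m:ℝ)^(l-1)
noncomputable def zR (l : ℕ) (m : ℕ) : ℝ := if 0 < m then 1 / (m:ℝ)^l else 0
noncomputable def gR (l : ℕ) (n : ℕ) : ℝ := if 0 < n then hsum n / (n:ℝ)^(l-1) else 0

lemma fD_nonneg (l a : ℕ) (p : ℕ × ℕ) : 0 ≤ fD l a p := by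
  rw [fD]; split <;> positivity

lemma fH_nonneg (l : ℕ) (p : ℕ × ℕ) : 0 ≤ fH l p := by
  rw [fH]; split
  · rename_i h
    have h1 : (p.2:ℝ) < p.1 := by exact_mod_cast h.1
    have h2 : (0:ℝ) < p.2 := by exact_mod_cast h.2
    have h3 : (0:ℝ) < (p.1:ℝ) - p.2 := by linarith
    positivity
  · exact le_refl _

lemma fG_nonneg (l : ℕ) (p : ℕ × ℕ) : 0 ≤ fG l p := by
  rw [fG]; split
  · rename_i h
    have h1 : (p.2:ℝ) < p.1 := by exact_mod_cast h.1
    have h2 : (0:ℝ) < p.2 := by exact_mod_cast h.2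
    have h3 : (0:ℝ) < (p.1:ℝ) - p.2 := by linarith
    positivity
  · exact le_refl _

lemma hR_nonneg (l : ℕ) (m : ℕ) : 0 ≤ hR l m := by
  rw [hR]; have := hsum_nonneg (m-1); positivity

lemma zR_nonneg (l : ℕ) (m : ℕ) : 0 ≤ zR l m := by
  rw [zR]; split <;> positivity

lemma gR_nonneg (l : ℕ) (n : ℕ) : 0 ≤ gR l n := by
  rw [gR]; split
  · have := hsum_nonneg n; positivity
  · exact le_refl _

lemma pointwise (l : ℕ) (hl : 3 ≤ l) (p : ℕ × ℕ) :
    (∑ a ∈ Icc 2 (l-1), fD l a p) + fH l p = fG l p := by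
  by_cases hc : p.2 < p.1 ∧ 0 < p.2
  · obtain ⟨L, rfl⟩ : ∃ L, l = L + 3 := ⟨l - 3, by omega⟩
    simp only [fD, fH, fG, hc.1, hc.2, and_self, if_true]
    have h1 : L + 3 - 1 = L + 2 := by omega
    have h2 : L + 3 - 2 = L + 1 := by omega
    rw [h1, h2]
    have hn : (0:ℝ) < p.2 := by exact_mod_cast hc.2
    have hmn : (p.2:ℝ) < p.1 := by exact_mod_cast hc.1
    exact key_id L _ _ hn hmn
  · simp only [fD, fH, fG, if_neg hc]
    simp

lemma fiberH (l : ℕ) (m : ℕ) : HasSum (fun n => fH l (m, n)) (hR l m) := by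
  have h0 : ∀ n ∉ Finset.range m, fH l (m, n) = 0 := by
    intro n hn
    simp only [Finset.mem_range, not_lt] at hn
    rw [fH, if_neg]
    push_neg
    intro h
    omega
  have key : HasSum (fun n => fH l (m, n)) (∑ n ∈ Finset.range m, fH l (m, n)) :=
    hasSum_sum_of_ne_finset_zero h0
  have hsub : Ico 1 m ⊆ range m := by
    intro x hx
    simp only [Finset.mem_Ico] at hx
    simp only [Finset.mem_range]
    omega
  have hz : ∀ x ∈ range m, x ∉ Ico 1 m → fH l (m, x) = 0 := by
    intro x hx hx2
    simp only [Finset.mem_range] at hx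
    simp only [Finset.mem_Ico, not_and, not_lt] at hx2
    rw [fH, if_neg]
    push_neg
    intro h
    omega
  have heq : (∑ n ∈ Finset.range m, fH l (m, n)) = hR l m := by
    rw [← Finset.sum_subset hsub hz]
    have hcongr : ∀ n ∈ Ico 1 m, fH l (m, n)
        = ((m:ℝ)^(l-1))⁻¹ * (((m:ℝ) - (n:ℝ))⁻¹) := by
      intro n hn
      simp only [Finset.mem_Ico] at hn
      rw [fH, if_pos ⟨hn.2, hn.1⟩, one_div, mul_inv]
    rw [Finset.sum_congr rfl hcongr, ← Finset.mul_sum]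
    have hinner : (∑ n ∈ Ico 1 m, ((m:ℝ) - (n:ℝ))⁻¹) = hsum (m-1) := by
      rw [Finset.sum_Ico_eq_sum_range, hsum,
        ← Finset.sum_range_reflect (fun j => 1 / ((j:ℝ)+1)) (m-1)]
      refine Finset.sum_congr rfl fun k hk => ?_
      simp only [Finset.mem_range] at hk
      have hkm : 2 + k ≤ m := by omega
      rw [one_div]
      congr 1
      rw [show m - 1 - 1 - k = m - (2+k) from by omega, Nat.cast_sub hkm]
      push_cast
      ring
    rw [hinner, hR, inv_mul_eq_div]
  rwa [heq] at key

lemma fiberG (l : ℕ) (hl : 3 ≤ l) (n : ℕ) :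
    HasSum (fun m => fG l (m, n)) (gR l n) := by
  by_cases hn : 0 < n
  · have hnR : (0:ℝ) < n := by exact_mod_cast hn
    have hnne : ((n:ℝ))^(l-2) ≠ 0 := by positivity
    have base := (telescope n hn).mul_right (1/(n:ℝ)^(l-2))
    have hshift : ∀ k : ℕ, fG l (k + (n+1), n)
        = 1/(((k:ℝ)+1+n)*((k:ℝ)+1)) * (1/(n:ℝ)^(l-2)) := by
      intro k
      rw [fG, if_pos ⟨by omega, hn⟩]
      have hc : ((k + (n+1) : ℕ) : ℝ) = (k:ℝ) + n + 1 := by push_cast; ring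
      simp only [hc]
      rw [div_mul_div_comm, one_mul]
      congr 1
      ring
    have base' : HasSum (fun k => fG l (k + (n+1), n))
        (hsum n / n * (1/(n:ℝ)^(l-2))) := by
      rw [show (fun k : ℕ => fG l (k+(n+1), n))
        = fun k : ℕ => 1/(((k:ℝ)+1+n)*((k:ℝ)+1)) * (1/(n:ℝ)^(l-2)) from funext hshift]
      exact base
    have hfull := (hasSum_nat_add_iff (f := fun m => fG l (m, n)) (n+1)).mp base'
    have hzero : (∑ i ∈ range (n+1), fG l (i, n)) = 0 := by
      apply Finset.sum_eq_zero
      intro i hi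
      simp only [Finset.mem_range] at hi
      rw [fG, if_neg]
      push_neg
      intro h
      omega
    rw [hzero, add_zero] at hfull
    have hg : gR l n = hsum n / n * (1/(n:ℝ)^(l-2)) := by
      rw [gR, if_pos hn, show l - 1 = (l-2) + 1 from by omega, pow_succ,
        div_mul_div_comm, mul_one]
      ring_nf
    rwa [hg]
  · have hall : ∀ m, fG l (m, n) = 0 := by
      intro m
      rw [fG, if_neg]
      push_neg
      intro h
      omega
    have hg : gR l n = 0 := by rw [gR, if_neg hn]
    rw [hg, show (fun m => fG l (m,n)) = fun _ => 0 from funext hall]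
    exact hasSum_zero

lemma gz (l : ℕ) (hl : 3 ≤ l) (n : ℕ) : gR l n = zR l n + hR l n := by
  rcases n with _ | k
  · simp [gR, zR, hR, hsum]
  · rw [gR, if_pos (Nat.succ_pos k), zR, if_pos (Nat.succ_pos k), hR,
      show k + 1 - 1 = k from rfl, hsum_succ]
    have hcast : ((k+1 : ℕ):ℝ) = (k:ℝ)+1 := by push_cast; ring
    rw [hcast]
    have hx : (0:ℝ) < ((k:ℝ)+1) := by positivity
    rw [show ((k:ℝ)+1)^l = ((k:ℝ)+1)^(l-1) * ((k:ℝ)+1) from by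
      rw [← pow_succ, show l - 1 + 1 = l from by omega]]
    have hp : ((k:ℝ)+1)^(l-1) ≠ 0 := by positivity
    field_simp
    ring

lemma summable_hR (l : ℕ) (hl : 3 ≤ l) : Summable (hR l) := by
  refine Summable.of_nonneg_of_le (hR_nonneg l) (fun m => ?_) summable_sqrt_div
  rcases Nat.eq_zero_or_pos m with h | h
  · subst h
    have : hR l 0 = 0 := by simp [hR, hsum]
    rw [this]
    positivity
  · have hmR : (1:ℝ) ≤ m := by exact_mod_cast h
    rw [hR]
    have h1 : hsum (m-1) ≤ 2 * Real.sqrt m := hsum_le' m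
    have h2 : (m:ℝ)^2 ≤ (m:ℝ)^(l-1) := pow_le_pow_right₀ hmR (by omega)
    calc hsum (m-1)/(m:ℝ)^(l-1) ≤ (2*Real.sqrt m)/(m:ℝ)^2 :=
          div_le_div₀ (by positivity) h1 (by positivity) h2
      _ = 2*(Real.sqrt m/(m:ℝ)^2) := by ring

lemma summable_zR (l : ℕ) (hl : 3 ≤ l) : Summable (zR l) := by
  refine Summable.of_nonneg_of_le (zR_nonneg l) (fun m => ?_)
    ((Real.summable_one_div_nat_pow (p := 2)).mpr one_lt_two)
  rw [zR]; split
  · rename_i h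
    have hm : (1:ℝ) ≤ m := by exact_mod_cast h
    exact one_div_le_one_div_of_le (by positivity) (pow_le_pow_right₀ hm (by omega))
  · positivity

end EulerSumAux

open EulerSumAux Finset in
theorem euler_sum_formula (l : ℕ) (hl : 3 ≤ l) :
    (∑ l1 ∈ Finset.Icc 2 (l - 1), dz l1 (l - l1)) = rz l := by
  classical
  set s := Finset.Icc 2 (l-1) with hs
  have EH : ∑' (p : ℕ×ℕ), ENNReal.ofReal (fH l p) = ∑' m, ENNReal.ofReal (hR l m) := by
    rw [ENNReal.tsum_prod']
    refine tsum_congr fun m => ?_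
    rw [← ENNReal.ofReal_tsum_of_nonneg (fun n => fH_nonneg l (m,n)) (fiberH l m).summable,
      (fiberH l m).tsum_eq]
  have EG : ∑' (p : ℕ×ℕ), ENNReal.ofReal (fG l p) = ∑' n, ENNReal.ofReal (gR l n) := by
    rw [ENNReal.tsum_prod', ENNReal.tsum_comm]
    refine tsum_congr fun n => ?_
    rw [← ENNReal.ofReal_tsum_of_nonneg (fun m => fG_nonneg l (m,n)) (fiberG l hl n).summable,
      (fiberG l hl n).tsum_eq]
  have Hne : (∑' m, ENNReal.ofReal (hR l m)) ≠ ⊤ := by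
    rw [← ENNReal.ofReal_tsum_of_nonneg (hR_nonneg l) (summable_hR l hl)]
    exact ENNReal.ofReal_ne_top
  have lhs_eq : ∀ p : ℕ×ℕ, (∑ a ∈ s, ENNReal.ofReal (fD l a p)) + ENNReal.ofReal (fH l p)
      = ENNReal.ofReal (fG l p) := by
    intro p
    rw [← ENNReal.ofReal_sum_of_nonneg (fun a _ => fD_nonneg l a p),
      ← ENNReal.ofReal_add (Finset.sum_nonneg fun a _ => fD_nonneg l a p) (fH_nonneg l p),
      pointwise l hl p]
  have keyE : (∑ a ∈ s, ∑' (p : ℕ×ℕ), ENNReal.ofReal (fD l a p)) + ∑' m, ENNReal.ofReal (hR l m)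
      = (∑' n, ENNReal.ofReal (zR l n)) + ∑' m, ENNReal.ofReal (hR l m) := by
    calc (∑ a ∈ s, ∑' (p : ℕ×ℕ), ENNReal.ofReal (fD l a p)) + ∑' m, ENNReal.ofReal (hR l m)
        = (∑' (p : ℕ×ℕ), ∑ a ∈ s, ENNReal.ofReal (fD l a p))
            + ∑' (p : ℕ×ℕ), ENNReal.ofReal (fH l p) := by
          rw [Summable.tsum_finsetSum (fun a _ => ENNReal.summable), EH]
      _ = ∑' (p : ℕ×ℕ), ((∑ a ∈ s, ENNReal.ofReal (fD l a p)) + ENNReal.ofReal (fH l p)) :=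
          ENNReal.tsum_add.symm
      _ = ∑' (p : ℕ×ℕ), ENNReal.ofReal (fG l p) := tsum_congr lhs_eq
      _ = ∑' n, ENNReal.ofReal (gR l n) := EG
      _ = ∑' n, (ENNReal.ofReal (zR l n) + ENNReal.ofReal (hR l n)) :=
          tsum_congr fun n => by
            rw [← ENNReal.ofReal_add (zR_nonneg l n) (hR_nonneg l n), gz l hl n]
      _ = (∑' n, ENNReal.ofReal (zR l n)) + ∑' n, ENNReal.ofReal (hR l n) := ENNReal.tsum_add
  have mainE : (∑ a ∈ s, ∑' (p : ℕ×ℕ), ENNReal.ofReal (fD l a p))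
      = ∑' n, ENNReal.ofReal (zR l n) := (ENNReal.add_left_inj Hne).mp keyE
  have hzofReal : (∑' n, ENNReal.ofReal (zR l n)) = ENNReal.ofReal (rz l) := by
    rw [← ENNReal.ofReal_tsum_of_nonneg (zR_nonneg l) (summable_zR l hl)]
    rfl
  have hDsummable : ∀ a ∈ s, Summable (fD l a) := by
    intro a ha
    have hle : (∑' (p : ℕ×ℕ), ENNReal.ofReal (fD l a p)) ≤ ∑' n, ENNReal.ofReal (zR l n) := by
      rw [← mainE]
      exact Finset.single_le_sum (f := fun a => ∑' (p : ℕ×ℕ), ENNReal.ofReal (fD l a p)) (fun i _ => zero_le) ha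
    have hne : (∑' (p : ℕ×ℕ), ENNReal.ofReal (fD l a p)) ≠ ⊤ :=
      ne_top_of_le_ne_top (by rw [hzofReal]; exact ENNReal.ofReal_ne_top) hle
    have h1 : Summable (fun p : ℕ×ℕ => (fD l a p).toNNReal) :=
      ENNReal.tsum_coe_ne_top_iff_summable.mp (by simpa [ENNReal.ofReal] using hne)
    have h2 : Summable (fun p : ℕ×ℕ => ((fD l a p).toNNReal : ℝ)) :=
      NNReal.summable_coe.mpr h1
    exact h2.congr fun p => Real.coe_toNNReal _ (fD_nonneg l a p)
  have hdz : ∀ a : ℕ, dz a (l - a) = ∑' (p : ℕ×ℕ), fD l a p := fun a => rfl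
  have hofReal : ENNReal.ofReal (∑ l1 ∈ s, dz l1 (l - l1)) = ENNReal.ofReal (rz l) := by
    rw [ENNReal.ofReal_sum_of_nonneg (fun a _ => by
      rw [hdz a]; exact tsum_nonneg (fD_nonneg l a))]
    rw [Finset.sum_congr rfl (fun a ha => by
      rw [hdz a, ENNReal.ofReal_tsum_of_nonneg (fD_nonneg l a) (hDsummable a ha)]),
      mainE, hzofReal]
  have hrznn : (0:ℝ) ≤ rz l := by
    have : rz l = ∑' n, zR l n := rfl
    rw [this]
    exact tsum_nonneg (zR_nonneg l)
  have hsumnn : (0:ℝ) ≤ ∑ l1 ∈ s, dz l1 (l - l1) :=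
    Finset.sum_nonneg fun a _ => by rw [hdz a]; exact tsum_nonneg (fD_nonneg l a)
  exact (ENNReal.ofReal_eq_ofReal_iff hsumnn hrznn).mp hofReal
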